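/- Let m ≥ 1 and n ≥ 2 be integers, and let U₁, …, Uₙ be independent identically distributed random variables taking values in the finite alphabet {1, …, m}, with distribution p_i = Pr[U₁ = i]. Let p̂_i = (1/n)·#{k : U_k = i} be the empirical frequencies and Ĥ_MLE = −Σ_{i=1}^m p̂_i·log₂ p̂_i the empirical (maximum-likelihood) entropy. Then for every real ε with 0 < ε ≤ 1, setting δ = √(2·(log₂ n)²·ln(2/ε)/n), one has Pr[ |Ĥ_MLE − E[Ĥ_MLE]| ≥ δ ] ≤ ε. -/

import Mathlib

open Real Finset MeasureTheory ProbabilityTheory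

set_option linter.unusedSectionVars false
set_option linter.unusedVariables false



lemma core_ineq (ρ s : ℝ) (h0 : 0 ≤ ρ) (h1 : ρ ≤ 1) :
    Real.log (1 - ρ + ρ * Real.exp s) - ρ * s ≤ s ^ 2 / 8 := by
  set D : ℝ → ℝ := fun s => 1 - ρ + ρ * Real.exp s with hDdef
  have hDpos : ∀ s, 0 < D s := by
    intro s
    rcases eq_or_lt_of_le h0 with h | h
    · simp [hDdef, ← h]
    · have : 0 < ρ * Real.exp s := mul_pos h (Real.exp_pos s)
      simp only [hDdef]; linarith
  set g : ℝ → ℝ := fun s => s ^ 2 / 8 + ρ * s - Real.log (D s) with hgdef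
  set g' : ℝ → ℝ := fun s => s / 4 + ρ - ρ * Real.exp s / D s with hg'def
  have hD : ∀ s, HasDerivAt D (ρ * Real.exp s) s := by
    intro s
    exact ((Real.hasDerivAt_exp s).const_mul ρ).const_add (1 - ρ)
  have hg : ∀ s, HasDerivAt g (g' s) s := by
    intro s
    have h1' : HasDerivAt (fun s : ℝ => s ^ 2 / 8 + ρ * s) (s / 4 + ρ) s := by
      have := ((hasDerivAt_pow 2 s).div_const 8).add ((hasDerivAt_id s).const_mul ρ)
      refine this.congr_deriv ?_; norm_num; ring
    have h2' : HasDerivAt (fun s => Real.log (D s)) (ρ * Real.exp s / D s) s :=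
      (hD s).log (hDpos s).ne'
    exact h1'.sub h2'
  have hgcont : Continuous g := by
    have : Differentiable ℝ g := fun x => (hg x).differentiableAt
    exact this.continuous
  have hg' : ∀ s, HasDerivAt g' (1 / 4 - (ρ * Real.exp s * D s - ρ * Real.exp s * (ρ * Real.exp s)) / (D s) ^ 2) s := by
    intro s
    have h1' : HasDerivAt (fun s : ℝ => s / 4 + ρ) (1 / 4) s := by
      simpa using ((hasDerivAt_id s).div_const 4).add_const ρ
    have h2' : HasDerivAt (fun s => ρ * Real.exp s / D s)
        ((ρ * Real.exp s * D s - ρ * Real.exp s * (ρ * Real.exp s)) / (D s) ^ 2) s :=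
      ((Real.hasDerivAt_exp s).const_mul ρ).div (hD s) (hDpos s).ne'
    exact h1'.sub h2'
  have hg''nonneg : ∀ s, 0 ≤ 1 / 4 - (ρ * Real.exp s * D s - ρ * Real.exp s * (ρ * Real.exp s)) / (D s) ^ 2 := by
    intro s
    have hDs := hDpos s
    rw [sub_nonneg, div_le_iff₀ (by positivity)]
    have hb : 0 ≤ ρ * Real.exp s := by positivity
    have hDeq : D s = (1 - ρ) + ρ * Real.exp s := rfl
    nlinarith [sq_nonneg ((1 - ρ) - ρ * Real.exp s)]
  have hg'mono : Monotone g' :=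
    monotone_of_deriv_nonneg (fun s => (hg' s).differentiableAt)
      (fun s => by rw [(hg' s).deriv]; exact hg''nonneg s)
  have hg'0 : g' 0 = 0 := by simp [hg'def, hDdef]
  have hgz : g 0 = 0 := by simp [hgdef, hDdef]
  have key : ∀ s, 0 ≤ g s := by
    intro s
    rcases le_total 0 s with h | h
    · have hm : MonotoneOn g (Set.Ici 0) :=
        monotoneOn_of_deriv_nonneg (convex_Ici 0) hgcont.continuousOn
          (fun x _ => (hg x).differentiableAt.differentiableWithinAt)
          (fun x hx => by
            rw [(hg x).deriv]
            have hx0 : (0:ℝ) ≤ x := by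
              simpa using (le_of_lt (by simpa [interior_Ici] using hx))
            calc (0:ℝ) = g' 0 := hg'0.symm
              _ ≤ g' x := hg'mono hx0)
      calc (0:ℝ) = g 0 := hgz.symm
        _ ≤ g s := hm (by simp) (by simpa using h) h
    · have hm : AntitoneOn g (Set.Iic 0) :=
        antitoneOn_of_deriv_nonpos (convex_Iic 0) hgcont.continuousOn
          (fun x _ => (hg x).differentiableAt.differentiableWithinAt)
          (fun x hx => by
            rw [(hg x).deriv]
            have hx0 : x ≤ (0:ℝ) := by
              simpa using (le_of_lt (by simpa [interior_Iic] using hx))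
            calc g' x ≤ g' 0 := hg'mono hx0
              _ = 0 := hg'0)
      calc (0:ℝ) = g 0 := hgz.symm
        _ ≤ g s := hm (by simpa using h) (by simp) h
  have h2 := key s
  simp only [hgdef, hDdef] at h2
  linarith



lemma hoeffding_fin {α : Type*} [Fintype α] [Nonempty α]
    (q : α → ℝ) (hq : ∀ a, 0 ≤ q a) (hq1 : ∑ a, q a = 1)
    (f : α → ℝ) (hmean : ∑ a, q a * f a = 0)
    (c l : ℝ) (hbd : ∀ a b, |f a - f b| ≤ c) :
    ∑ a, q a * Real.exp (l * f a) ≤ Real.exp (l ^ 2 * c ^ 2 / 8) := by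
  obtain ⟨amax, -, hmax⟩ := Finset.exists_max_image univ f univ_nonempty
  obtain ⟨amin, -, hmin⟩ := Finset.exists_min_image univ f univ_nonempty
  set A := f amin with hA
  set B := f amax with hB
  have hAB : A ≤ B := hmax amin (mem_univ _)
  have hA0 : A ≤ 0 := by
    by_contra h
    push_neg at h
    have : ∀ a, A * q a ≤ q a * f a := fun a => by
      have := hmin a (mem_univ a); have := hq a; nlinarith
    have hs : A * 1 ≤ (0:ℝ) := by
      rw [← hq1, ← hmean, Finset.mul_sum]
      exact Finset.sum_le_sum fun a _ => this a
    linarith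
  have hB0 : 0 ≤ B := by
    by_contra h
    push_neg at h
    have : ∀ a, q a * f a ≤ B * q a := fun a => by
      have := hmax a (mem_univ a); have := hq a; nlinarith
    have hs : (0:ℝ) ≤ B * 1 := by
      rw [← hq1, ← hmean, Finset.mul_sum]
      exact Finset.sum_le_sum fun a _ => this a
    linarith
  have hBAc : B - A ≤ c := by
    have := hbd amax amin
    rw [abs_le] at this
    linarith [this.2]
  have hc0 : 0 ≤ c := le_trans (by linarith) hBAc
  rcases eq_or_lt_of_le hAB with hEq | hlt
  · -- constant case : f a = A = 0 for all a
    have hf0 : ∀ a, f a = 0 := by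
      intro a
      have h1' := hmin a (mem_univ a)
      have h2' := hmax a (mem_univ a)
      have hB' : B = A := hEq.symm
      linarith
    simp only [hf0, mul_zero, Real.exp_zero, mul_one]
    rw [hq1]
    exact Real.one_le_exp (by positivity)
  · -- main case
    have hBA : 0 < B - A := by linarith
    -- convexity bound for each a
    have hconv : ∀ a, Real.exp (l * f a)
        ≤ (B - f a) / (B - A) * Real.exp (l * A) + (f a - A) / (B - A) * Real.exp (l * B) := by
      intro a
      have hu : 0 ≤ (B - f a) / (B - A) := by
        have := hmax a (mem_univ a)
        exact div_nonneg (by linarith) hBA.le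
      have hv : 0 ≤ (f a - A) / (B - A) := by
        have := hmin a (mem_univ a)
        exact div_nonneg (by linarith) hBA.le
      have huv : (B - f a) / (B - A) + (f a - A) / (B - A) = 1 := by
        field_simp; ring
      have := convexOn_exp.2 (Set.mem_univ (l * A)) (Set.mem_univ (l * B)) hu hv huv
      have harg : (B - f a) / (B - A) * (l * A) + (f a - A) / (B - A) * (l * B) = l * f a := by
        field_simp; ring
      simp only [smul_eq_mul] at this
      rw [harg] at this
      exact this
    have hsum : ∑ a, q a * Real.exp (l * f a)
        ≤ B / (B - A) * Real.exp (l * A) + (-A) / (B - A) * Real.exp (l * B) := by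
      calc ∑ a, q a * Real.exp (l * f a)
          ≤ ∑ a, q a * ((B - f a) / (B - A) * Real.exp (l * A) + (f a - A) / (B - A) * Real.exp (l * B)) :=
            Finset.sum_le_sum fun a _ => mul_le_mul_of_nonneg_left (hconv a) (hq a)
        _ = (B * Real.exp (l * A) - A * Real.exp (l * B)) / (B - A) * (∑ a, q a)
            - (Real.exp (l * A) - Real.exp (l * B)) / (B - A) * (∑ a, q a * f a) := by
            rw [Finset.mul_sum, Finset.mul_sum, ← Finset.sum_sub_distrib]
            congr 1; ext a; field_simp; ring
        _ = B / (B - A) * Real.exp (l * A) + (-A) / (B - A) * Real.exp (l * B) := by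
            rw [hq1, hmean]; ring
    set ρ := -A / (B - A) with hρ
    set s := l * (B - A) with hs
    have hρ0 : 0 ≤ ρ := div_nonneg (by linarith) hBA.le
    have hρ1 : ρ ≤ 1 := by
      rw [hρ, div_le_one hBA]; linarith
    have hkey : B / (B - A) * Real.exp (l * A) + (-A) / (B - A) * Real.exp (l * B)
        = Real.exp (-(ρ * s)) * (1 - ρ + ρ * Real.exp s) := by
      have e1 : l * A = -(ρ * s) := by rw [hρ, hs]; field_simp
      have e2 : l * B = -(ρ * s) + s := by rw [hρ, hs]; field_simp; ring
      rw [e1, e2, Real.exp_add]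
      have e3 : B / (B - A) = 1 - ρ := by rw [hρ]; field_simp; ring
      rw [e3]; ring
    have hpos : 0 < 1 - ρ + ρ * Real.exp s := by
      rcases eq_or_lt_of_le hρ0 with h | h
      · simp [← h]
      · nlinarith [Real.exp_pos s, mul_pos h (Real.exp_pos s)]
    have hle : Real.exp (-(ρ * s)) * (1 - ρ + ρ * Real.exp s) ≤ Real.exp (s ^ 2 / 8) := by
      rw [← Real.exp_log hpos, ← Real.exp_add]
      apply Real.exp_le_exp.mpr
      have := core_ineq ρ s hρ0 hρ1
      linarith
    have hfin : Real.exp (s ^ 2 / 8) ≤ Real.exp (l ^ 2 * c ^ 2 / 8) := by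
      apply Real.exp_le_exp.mpr
      rw [hs]
      have h1' : (l * (B - A)) ^ 2 = l ^ 2 * (B - A) ^ 2 := by ring
      have h2' : (B - A) ^ 2 ≤ c ^ 2 := by nlinarith
      nlinarith [sq_nonneg l]
    calc ∑ a, q a * Real.exp (l * f a)
        ≤ B / (B - A) * Real.exp (l * A) + (-A) / (B - A) * Real.exp (l * B) := hsum
      _ = Real.exp (-(ρ * s)) * (1 - ρ + ρ * Real.exp s) := hkey
      _ ≤ Real.exp (s ^ 2 / 8) := hle
      _ ≤ Real.exp (l ^ 2 * c ^ 2 / 8) := hfin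



section mgf
variable {α : Type*} [Fintype α] [Nonempty α]

/-- product weight -/
def W (q : α → ℝ) (n : ℕ) (x : Fin n → α) : ℝ := ∏ k, q (x k)

lemma sum_cons_decomp (q : α → ℝ) (n : ℕ) (F : (Fin (n+1) → α) → ℝ) :
    ∑ x : Fin (n+1) → α, W q (n+1) x * F x
      = ∑ y : Fin n → α, W q n y * ∑ a, q a * F (Fin.cons a y) := by
  rw [← (Fin.consEquiv (fun _ : Fin (n+1) => α)).sum_comp]
  rw [Fintype.sum_prod_type]
  rw [Finset.sum_comm]
  congr 1; ext y
  rw [Finset.mul_sum]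
  congr 1; ext a
  simp only [Fin.consEquiv, Equiv.coe_fn_mk, W]
  rw [Fin.prod_univ_succ]
  simp only [Fin.cons_zero, Fin.cons_succ]
  ring

lemma W_nonneg (q : α → ℝ) (hq : ∀ a, 0 ≤ q a) (n : ℕ) (x : Fin n → α) : 0 ≤ W q n x :=
  Finset.prod_nonneg fun k _ => hq _

lemma sum_W (q : α → ℝ) (hq1 : ∑ a, q a = 1) (n : ℕ) : ∑ x : Fin n → α, W q n x = 1 := by
  induction n with
  | zero => simp [W]
  | succ n ih =>
      have := sum_cons_decomp q n (fun _ => (1:ℝ))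
      simpa [← Finset.sum_mul, hq1, ih] using this

/-- bounded differences -/
def BD (n : ℕ) (F : (Fin n → α) → ℝ) (c : ℝ) : Prop :=
  ∀ (k : Fin n) (x y : Fin n → α), (∀ j, j ≠ k → x j = y j) → |F x - F y| ≤ c

lemma mgf_bound (q : α → ℝ) (hq : ∀ a, 0 ≤ q a) (hq1 : ∑ a, q a = 1)
    (c l : ℝ) :
    ∀ (n : ℕ) (F : (Fin n → α) → ℝ), BD n F c →
      ∑ x : Fin n → α, W q n x * Real.exp (l * (F x - ∑ x', W q n x' * F x'))
        ≤ Real.exp (l ^ 2 * (n * c ^ 2) / 8) := by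
  intro n
  induction n with
  | zero =>
      intro F _
      have : (Finset.univ : Finset (Fin 0 → α)) = {fun i => i.elim0} := by
        apply Finset.eq_of_subset_of_card_le
        · intro x _; simp; funext i; exact i.elim0
        · simp
      simp [this, W]
  | succ n ih =>
      intro F hF
      set EF := ∑ x', W q (n+1) x' * F x' with hEF
      set G : (Fin n → α) → ℝ := fun y => ∑ a, q a * F (Fin.cons a y) with hG
      have hEG : ∑ y, W q n y * G y = EF := (sum_cons_decomp q n F).symm
      -- inner Hoeffding
      have inner : ∀ y : Fin n → α,
          ∑ a, q a * Real.exp (l * (F (Fin.cons a y) - G y)) ≤ Real.exp (l ^ 2 * c ^ 2 / 8) := by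
        intro y
        apply hoeffding_fin q hq hq1 (fun a => F (Fin.cons a y) - G y)
        · simp only [mul_sub]
          rw [Finset.sum_sub_distrib, ← Finset.sum_mul, hq1, one_mul]
          simp [hG]
        · intro a b
          have : ∀ j, j ≠ (0 : Fin (n+1)) → (Fin.cons a y : Fin (n+1) → α) j = (Fin.cons b y : Fin (n+1) → α) j := by
            intro j hj
            rcases Fin.eq_zero_or_eq_succ j with h | ⟨i, rfl⟩
            · exact absurd h hj
            · simp
          simpa using hF 0 (Fin.cons a y) (Fin.cons b y) this
      -- G has bounded differences
      have hGbd : BD n G c := by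
        intro k y y' hyy
        have : |G y - G y'| ≤ ∑ a, q a * c := by
          rw [hG]
          simp only
          rw [← Finset.sum_sub_distrib]
          refine (Finset.abs_sum_le_sum_abs _ _).trans ?_
          apply Finset.sum_le_sum
          intro a _
          rw [← mul_sub, abs_mul, abs_of_nonneg (hq a)]
          apply mul_le_mul_of_nonneg_left _ (hq a)
          apply hF k.succ
          intro j hj
          rcases Fin.eq_zero_or_eq_succ j with rfl | ⟨i, rfl⟩
          · simp
          · simp only [Fin.cons_succ]
            exact hyy i (by simpa using hj)
        calc |G y - G y'| ≤ ∑ a, q a * c := this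
          _ = c := by rw [← Finset.sum_mul, hq1, one_mul]
      calc ∑ x : Fin (n+1) → α, W q (n+1) x * Real.exp (l * (F x - EF))
          = ∑ y : Fin n → α, W q n y * ∑ a, q a * Real.exp (l * (F (Fin.cons a y) - EF)) :=
            sum_cons_decomp q n _
        _ = ∑ y : Fin n → α, W q n y * (Real.exp (l * (G y - EF)) *
              ∑ a, q a * Real.exp (l * (F (Fin.cons a y) - G y))) := by
            congr 1; ext y
            congr 1
            rw [Finset.mul_sum]
            congr 1; ext a
            rw [show l * (F (Fin.cons a y) - EF) = l * (G y - EF) + l * (F (Fin.cons a y) - G y) by ring,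
              Real.exp_add]
            ring
        _ ≤ ∑ y : Fin n → α, W q n y * (Real.exp (l * (G y - EF)) * Real.exp (l ^ 2 * c ^ 2 / 8)) := by
            apply Finset.sum_le_sum
            intro y _
            apply mul_le_mul_of_nonneg_left _ (W_nonneg q hq n y)
            exact mul_le_mul_of_nonneg_left (inner y) (Real.exp_pos _).le
        _ = Real.exp (l ^ 2 * c ^ 2 / 8) * ∑ y : Fin n → α, W q n y * Real.exp (l * (G y - EF)) := by
            rw [Finset.mul_sum]; congr 1; ext y; ring
        _ ≤ Real.exp (l ^ 2 * c ^ 2 / 8) * Real.exp (l ^ 2 * (n * c ^ 2) / 8) := by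
            apply mul_le_mul_of_nonneg_left _ (Real.exp_pos _).le
            have := ih G hGbd
            rwa [hEG] at this
        _ = Real.exp (l ^ 2 * ((n+1 : ℕ) * c ^ 2) / 8) := by
            rw [← Real.exp_add]
            congr 1
            push_cast
            ring
end mgf

lemma chernoff_one {α : Type*} [Fintype α] [Nonempty α]
    (q : α → ℝ) (hq : ∀ a, 0 ≤ q a) (hq1 : ∑ a, q a = 1)
    (n : ℕ) (hn : 0 < n) (F : (Fin n → α) → ℝ) (c : ℝ) (hc : 0 < c) (hF : BD n F c)
    (t : ℝ) (ht : 0 < t) :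
    ∑ x ∈ Finset.univ.filter (fun x => t ≤ F x - ∑ x', W q n x' * F x'), W q n x
      ≤ Real.exp (-2 * t ^ 2 / (n * c ^ 2)) := by
  set EF := ∑ x', W q n x' * F x' with hEF
  set l := 4 * t / (n * c ^ 2) with hl
  have hnc : (0:ℝ) < n * c ^ 2 := by positivity
  have hl0 : 0 ≤ l := by rw [hl]; exact div_nonneg (by linarith) hnc.le
  have step1 : ∑ x ∈ Finset.univ.filter (fun x => t ≤ F x - EF), W q n x
      ≤ ∑ x : Fin n → α, W q n x * Real.exp (l * (F x - EF - t)) := by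
    calc ∑ x ∈ Finset.univ.filter (fun x => t ≤ F x - EF), W q n x
        ≤ ∑ x ∈ Finset.univ.filter (fun x => t ≤ F x - EF), W q n x * Real.exp (l * (F x - EF - t)) := by
          apply Finset.sum_le_sum
          intro x hx
          rw [Finset.mem_filter] at hx
          nlinarith [W_nonneg q hq n x, Real.one_le_exp (mul_nonneg hl0 (by linarith [hx.2] : (0:ℝ) ≤ F x - EF - t)), W_nonneg q hq n x]
      _ ≤ ∑ x : Fin n → α, W q n x * Real.exp (l * (F x - EF - t)) := by
          apply Finset.sum_le_sum_of_subset_of_nonneg (Finset.filter_subset _ _)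
          intro x _ _
          exact mul_nonneg (W_nonneg q hq n x) (Real.exp_pos _).le
  have step2 : ∑ x : Fin n → α, W q n x * Real.exp (l * (F x - EF - t))
      = Real.exp (-(l * t)) * ∑ x : Fin n → α, W q n x * Real.exp (l * (F x - EF)) := by
    rw [Finset.mul_sum]
    congr 1; ext x
    rw [show l * (F x - EF - t) = -(l * t) + l * (F x - EF) by ring, Real.exp_add]
    ring
  have step3 := mgf_bound q hq hq1 c l n F hF
  have final : Real.exp (-(l * t)) * Real.exp (l ^ 2 * (n * c ^ 2) / 8)
      = Real.exp (-2 * t ^ 2 / (n * c ^ 2)) := by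
    rw [← Real.exp_add]
    congr 1
    rw [hl]
    field_simp
    ring
  calc ∑ x ∈ Finset.univ.filter (fun x => t ≤ F x - EF), W q n x
      ≤ Real.exp (-(l * t)) * ∑ x : Fin n → α, W q n x * Real.exp (l * (F x - EF)) := by
        rw [← step2]; exact step1
    _ ≤ Real.exp (-(l * t)) * Real.exp (l ^ 2 * (n * c ^ 2) / 8) :=
        mul_le_mul_of_nonneg_left step3 (Real.exp_pos _).le
    _ = Real.exp (-2 * t ^ 2 / (n * c ^ 2)) := final

lemma mcdiarmid_fin {α : Type*} [Fintype α] [Nonempty α]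
    (q : α → ℝ) (hq : ∀ a, 0 ≤ q a) (hq1 : ∑ a, q a = 1)
    (n : ℕ) (hn : 0 < n) (F : (Fin n → α) → ℝ) (c : ℝ) (hc : 0 < c) (hF : BD n F c)
    (t : ℝ) (ht : 0 < t) :
    ∑ x ∈ Finset.univ.filter (fun x => t ≤ |F x - ∑ x', W q n x' * F x'|), W q n x
      ≤ 2 * Real.exp (-2 * t ^ 2 / (n * c ^ 2)) := by
  classical
  set EF := ∑ x', W q n x' * F x' with hEF
  have h1 := chernoff_one q hq hq1 n hn F c hc hF t ht
  have hFneg : BD n (fun x => -F x) c := by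
    intro k x y hxy
    rw [show -F x - -F y = -(F x - F y) by ring, abs_neg]
    exact hF k x y hxy
  have h2 := chernoff_one q hq hq1 n hn (fun x => -F x) c hc hFneg t ht
  have hEFneg : ∑ x' : Fin n → α, W q n x' * (fun x => -F x) x' = -EF := by
    rw [hEF, ← Finset.sum_neg_distrib]
    congr 1; ext x; ring
  rw [hEFneg] at h2
  have hsub : Finset.univ.filter (fun x : Fin n → α => t ≤ |F x - EF|)
      ⊆ Finset.univ.filter (fun x => t ≤ F x - EF) ∪ Finset.univ.filter (fun x => t ≤ -F x - -EF) := by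
    intro x hx
    rw [Finset.mem_filter] at hx
    rw [Finset.mem_union, Finset.mem_filter, Finset.mem_filter]
    rcases abs_cases (F x - EF) with ⟨habs, -⟩ | ⟨habs, -⟩
    · left; exact ⟨Finset.mem_univ _, by linarith [hx.2]⟩
    · right; refine ⟨Finset.mem_univ _, by linarith [hx.2]⟩
  calc ∑ x ∈ Finset.univ.filter (fun x => t ≤ |F x - EF|), W q n x
      ≤ ∑ x ∈ (Finset.univ.filter (fun x => t ≤ F x - EF) ∪ Finset.univ.filter (fun x : Fin n → α => t ≤ -F x - -EF)), W q n x :=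
        Finset.sum_le_sum_of_subset_of_nonneg hsub (fun x _ _ => W_nonneg q hq n x)
    _ ≤ (∑ x ∈ Finset.univ.filter (fun x => t ≤ F x - EF), W q n x)
        + ∑ x ∈ Finset.univ.filter (fun x : Fin n → α => t ≤ -F x - -EF), W q n x := by
        have := Finset.sum_union_inter (s₁ := Finset.univ.filter (fun x : Fin n → α => t ≤ F x - EF))
          (s₂ := Finset.univ.filter (fun x : Fin n → α => t ≤ -F x - -EF)) (f := W q n)
        have hnn : 0 ≤ ∑ x ∈ (Finset.univ.filter (fun x : Fin n → α => t ≤ F x - EF) ∩ Finset.univ.filter (fun x : Fin n → α => t ≤ -F x - -EF)), W q n x :=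
          Finset.sum_nonneg fun x _ => W_nonneg q hq n x
        linarith
    _ ≤ Real.exp (-2 * t ^ 2 / (n * c ^ 2)) + Real.exp (-2 * t ^ 2 / (n * c ^ 2)) := add_le_add h1 h2
    _ = 2 * Real.exp (-2 * t ^ 2 / (n * c ^ 2)) := by ring


lemma ent_step (n j : ℕ) (hn : 2 ≤ n) (hj : j + 1 ≤ n) :
    |(((j:ℝ)+1)/n * Real.logb 2 (((j:ℝ)+1)/n)) - ((j:ℝ)/n * Real.logb 2 ((j:ℝ)/n))|
      ≤ Real.logb 2 n / n := by
  have hN : (0:ℝ) < n := by positivity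
  have h2 : (0:ℝ) < Real.log 2 := Real.log_pos (by norm_num)
  -- reduce to natural log
  rw [Real.logb, Real.logb, Real.logb]
  rw [div_div]
  rw [show ((j:ℝ)+1)/n * (Real.log (((j:ℝ)+1)/n) / Real.log 2) - (j:ℝ)/n * (Real.log ((j:ℝ)/n) / Real.log 2)
      = ((((j:ℝ)+1)/n * Real.log (((j:ℝ)+1)/n)) - ((j:ℝ)/n * Real.log ((j:ℝ)/n))) / Real.log 2 by ring,
    abs_div, abs_of_pos h2,
    show Real.log ↑n / (Real.log 2 * ↑n) = (Real.log ↑n / ↑n) / Real.log 2 by ring,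
    div_le_div_iff_of_pos_right h2]
  -- now natural log statement
  set L := Real.log n with hL
  have hL0 : 0 < L := Real.log_pos (by exact_mod_cast by norm_num <;> omega)
  set Q := ((j:ℝ)+1) * Real.log ((j:ℝ)+1) - (j:ℝ) * Real.log (j:ℝ) with hQ
  have hkey : ((((j:ℝ)+1)/n * Real.log (((j:ℝ)+1)/n)) - ((j:ℝ)/n * Real.log ((j:ℝ)/n))) = (Q - L) / n := by
    rcases Nat.eq_zero_or_pos j with rfl | hjpos
    · simp only [Nat.cast_zero, hQ]
      rw [Real.log_div (by norm_num) hN.ne']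
      simp [hL]
      ring
    · have hjR : (0:ℝ) < j := by exact_mod_cast hjpos
      rw [Real.log_div (by positivity) hN.ne', Real.log_div (by positivity) hN.ne']
      rw [hQ, hL]
      field_simp
      ring
  rw [hkey, abs_div, abs_of_pos hN, div_le_div_iff_of_pos_right hN]
  -- |Q - L| ≤ L  ⟺ 0 ≤ Q ≤ 2 L
  have hQ0 : 0 ≤ Q := by
    rw [hQ]
    have h1 : (0:ℝ) ≤ Real.log ((j:ℝ)+1) := Real.log_nonneg (by push_cast; linarith [Nat.cast_nonneg (α := ℝ) j])
    have h2 : (j:ℝ) * Real.log (j:ℝ) ≤ (j:ℝ) * Real.log ((j:ℝ)+1) := by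
      rcases Nat.eq_zero_or_pos j with rfl | hjpos
      · simp
      · have hjR : (0:ℝ) < j := by exact_mod_cast hjpos
        exact mul_le_mul_of_nonneg_left (Real.log_le_log hjR (by linarith)) hjR.le
    nlinarith
  have hQ2L : Q ≤ 2 * L := by
    rcases Nat.eq_zero_or_pos j with rfl | hjpos
    · simp [hQ]
      positivity
    · have hjR : (1:ℝ) ≤ j := by exact_mod_cast hjpos
      have hlog1 : Real.log ((j:ℝ)+1) ≤ L := by
        rw [hL]
        apply Real.log_le_log (by linarith)
        exact_mod_cast hj
      have hlog2 : (j:ℝ) * (Real.log ((j:ℝ)+1) - Real.log (j:ℝ)) ≤ 1 := by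
        rw [← Real.log_div (by linarith) (by linarith)]
        have : Real.log (((j:ℝ)+1) / j) ≤ ((j:ℝ)+1)/j - 1 :=
          Real.log_le_sub_one_of_pos (by positivity)
        have h3 : ((j:ℝ)+1)/j - 1 = 1/j := by field_simp; ring
        calc (j:ℝ) * Real.log (((j:ℝ)+1)/j) ≤ (j:ℝ) * (1/j) := by
              rw [h3] at this
              exact mul_le_mul_of_nonneg_left this (by linarith)
          _ = 1 := by field_simp
      have hQ' : Q = Real.log ((j:ℝ)+1) + (j:ℝ) * (Real.log ((j:ℝ)+1) - Real.log (j:ℝ)) := by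
        rw [hQ]; ring
      rcases eq_or_lt_of_le hn with hn2 | hn3
      · -- n = 2, j = 1
        have hj1 : j = 1 := by omega
        subst hj1
        rw [hQ', hL, ← hn2]
        norm_num
        rw [show ((2:ℝ)) = 1 + 1 by norm_num]
        linarith [Real.log_le_sub_one_of_pos (x := (1:ℝ)+1) (by norm_num)]
      · -- n ≥ 3
        have h1L : 1 ≤ L := by
          rw [hL, show (1:ℝ) = Real.log (Real.exp 1) by simp]
          apply Real.log_le_log (Real.exp_pos 1)
          have := Real.exp_one_lt_d9
          have h3 : (3:ℝ) ≤ n := by exact_mod_cast hn3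
          linarith
        linarith [hQ'.le]
  rw [abs_le]
  constructor <;> linarith




lemma cnt_succ {n m : ℕ} (x y : Fin n → Fin m) (k : Fin n)
    (hxy : ∀ j, j ≠ k → x j = y j) (a : Fin m) (ha : x k = a) (hb : y k ≠ a) :
    (univ.filter fun j => x j = a).card = (univ.filter fun j => y j = a).card + 1 := by
  have hset : (univ.filter fun j => x j = a) = insert k (univ.filter fun j => y j = a) := by
    ext j
    simp only [mem_filter, mem_univ, true_and, mem_insert]
    constructor
    · intro h
      by_cases hjk : j = k
      · exact Or.inl hjk
      · exact Or.inr (by rw [← hxy j hjk]; exact h)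
    · rintro (rfl | h)
      · exact ha
      · by_cases hjk : j = k
        · subst hjk; exact absurd h hb
        · rw [hxy j hjk]; exact h
  rw [hset, Finset.card_insert_of_notMem (by simp [hb])]

lemma cnt_eq {n m : ℕ} (x y : Fin n → Fin m) (k : Fin n)
    (hxy : ∀ j, j ≠ k → x j = y j) (i : Fin m) (hxi : x k ≠ i) (hyi : y k ≠ i) :
    (univ.filter fun j => x j = i).card = (univ.filter fun j => y j = i).card := by
  congr 1
  ext j
  simp only [mem_filter, mem_univ, true_and]
  by_cases hjk : j = k
  · subst hjk; simp [hxi, hyi]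
  · rw [hxy j hjk]

lemma ent_BD (n m : ℕ) (hn : 2 ≤ n) :
    BD n (fun x : Fin n → Fin m =>
      -∑ i : Fin m, ((univ.filter fun k => x k = i).card : ℝ)/n
          * Real.logb 2 (((univ.filter fun k => x k = i).card : ℝ)/n))
      (2 * Real.logb 2 n / n) := by
  intro k x y hxy
  set g : ℝ → ℝ := fun t => t/n * Real.logb 2 (t/n) with hg
  have hstep : ∀ j : ℕ, j + 1 ≤ n → |g ((j:ℝ)+1) - g (j:ℝ)| ≤ Real.logb 2 n / n := by
    intro j hj
    have := ent_step n j hn hj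
    simpa [hg, add_div, div_div] using this
  by_cases hab : x k = y k
  · have : x = y := by
      funext j
      by_cases hjk : j = k
      · subst hjk; exact hab
      · exact hxy j hjk
    subst this
    simp only [sub_self, abs_zero]
    have h1 : (1:ℝ) ≤ Real.logb 2 n := by
      have hlog : Real.log 2 ≤ Real.log n := Real.log_le_log (by norm_num) (by exact_mod_cast hn)
      rw [Real.logb, le_div_iff₀ (Real.log_pos (by norm_num))]
      linarith
    positivity
  · set a := x k with hadef
    set b := y k with hbdef
    set cx : Fin m → ℕ := fun i => (univ.filter fun j => x j = i).card with hcx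
    set cy : Fin m → ℕ := fun i => (univ.filter fun j => y j = i).card with hcy
    have hca : cx a = cy a + 1 := cnt_succ x y k hxy a rfl (by rw [← hbdef]; exact fun h => hab h.symm)
    have hcb : cy b = cx b + 1 := cnt_succ y x k (fun j hj => (hxy j hj).symm) b rfl (by rw [← hadef]; exact fun h => hab h)
    have hcother : ∀ i, i ≠ a → i ≠ b → cx i = cy i := fun i hia hib =>
      cnt_eq x y k hxy i (fun h => hia (hadef.trans h).symm) (fun h => hib (hbdef.trans h).symm)
    have hcaub : cy a + 1 ≤ n := by
      rw [← hca, hcx]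
      simpa using Finset.card_le_univ (univ.filter fun j => x j = a)
    have hcbub : cx b + 1 ≤ n := by
      rw [← hcb, hcy]
      simpa using Finset.card_le_univ (univ.filter fun j => y j = b)
    have hFdiff : (fun x : Fin n → Fin m =>
        -∑ i : Fin m, ((univ.filter fun k => x k = i).card : ℝ)/n
            * Real.logb 2 (((univ.filter fun k => x k = i).card : ℝ)/n)) x
        - (fun x : Fin n → Fin m =>
        -∑ i : Fin m, ((univ.filter fun k => x k = i).card : ℝ)/n
            * Real.logb 2 (((univ.filter fun k => x k = i).card : ℝ)/n)) y
        = (g (cy a) - g (cx a)) + (g (cy b) - g (cx b)) := by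
      simp only
      rw [neg_sub_neg, ← Finset.sum_sub_distrib]
      have : ∀ i : Fin m, (g (cy i) - g (cx i))
          = (((univ.filter fun j => y j = i).card : ℝ)/n * Real.logb 2 (((univ.filter fun j => y j = i).card : ℝ)/n))
            - (((univ.filter fun j => x j = i).card : ℝ)/n * Real.logb 2 (((univ.filter fun j => x j = i).card : ℝ)/n)) := by
        intro i; simp [hg, hcx, hcy]
      rw [show (∑ i : Fin m,
          (((univ.filter fun j => y j = i).card : ℝ)/n * Real.logb 2 (((univ.filter fun j => y j = i).card : ℝ)/n)
            - ((univ.filter fun j => x j = i).card : ℝ)/n * Real.logb 2 (((univ.filter fun j => x j = i).card : ℝ)/n)))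
          = ∑ i : Fin m, (g (cy i) - g (cx i)) by
        apply Finset.sum_congr rfl; intro i _; rw [this i]]
      rw [← Finset.sum_subset (Finset.subset_univ ({a, b} : Finset (Fin m)))]
      · rw [Finset.sum_pair (by rw [hadef, hbdef]; exact hab)]
      · intro i _ hi
        simp only [Finset.mem_insert, Finset.mem_singleton, not_or] at hi
        rw [hcother i hi.1 hi.2, sub_self]
    rw [hFdiff]
    have hDa : |g (cy a) - g (cx a)| ≤ Real.logb 2 n / n := by
      have := hstep (cy a) hcaub
      rw [hca]
      push_cast
      rw [← abs_neg]
      simpa [neg_sub] using this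
    have hDb : |g (cy b) - g (cx b)| ≤ Real.logb 2 n / n := by
      have := hstep (cx b) hcbub
      rw [hcb]
      push_cast
      simpa using this
    calc |(g (cy a) - g (cx a)) + (g (cy b) - g (cx b))|
        ≤ |g (cy a) - g (cx a)| + |g (cy b) - g (cx b)| := abs_add_le _ _
      _ ≤ Real.logb 2 n / n + Real.logb 2 n / n := add_le_add hDa hDb
      _ = 2 * Real.logb 2 n / n := by ring







/-- **Concentration of the empirical entropy around its mean (Antos–Kontoyiannis).**
For `n ≥ 2` i.i.d. samples from a distribution on a finite alphabet of size `m`, with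
empirical entropy `Ĥ_MLE`, for every `ε ∈ (0, 1]`, setting
`δ = √(2 (log₂ n)² ln(2/ε) / n)`, one has `Pr[|Ĥ_MLE - E[Ĥ_MLE]| ≥ δ] ≤ ε`. -/
theorem empirical_entropy_concentration
    {Ω : Type*} [MeasurableSpace Ω] (μ : Measure Ω) [IsProbabilityMeasure μ]
    (m n : ℕ) (hm : 1 ≤ m) (hn : 2 ≤ n)
    (U : Fin n → Ω → Fin m)
    (hmeas : ∀ k, Measurable (U k))
    (hindep : iIndepFun U μ)
    (p : Fin m → ℝ) (hp : ∀ k i, (μ {ω | U k ω = i}).toReal = p i)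
    (phat : Fin m → Ω → ℝ)
    (hphat : ∀ i ω, phat i ω = ((Finset.univ.filter fun k => U k ω = i).card : ℝ) / n)
    (Hmle : Ω → ℝ)
    (hHmle : ∀ ω, Hmle ω = -∑ i : Fin m, phat i ω * Real.logb 2 (phat i ω))
    (ε : ℝ) (hε₀ : 0 < ε) (hε₁ : ε ≤ 1) :
    μ {ω | Real.sqrt (2 * (Real.logb 2 n) ^ 2 * Real.log (2 / ε) / n)
          ≤ |Hmle ω - ∫ ω', Hmle ω' ∂μ|}
      ≤ ENNReal.ofReal ε := by
  classical
  have hm' : Nonempty (Fin m) := ⟨⟨0, hm⟩⟩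
  have hn0 : 0 < n := by omega
  have hnR : (0:ℝ) < n := by positivity
  set L := Real.logb 2 n with hL
  have hL1 : (1:ℝ) ≤ L := by
    have hlog : Real.log 2 ≤ Real.log n := Real.log_le_log (by norm_num) (by exact_mod_cast hn)
    rw [hL, Real.logb, le_div_iff₀ (Real.log_pos (by norm_num))]
    linarith
  have hL0 : 0 < L := by linarith
  set δ := Real.sqrt (2 * L ^ 2 * Real.log (2 / ε) / n) with hδ
  have hK : 0 < Real.log (2 / ε) := Real.log_pos (by rw [lt_div_iff₀ hε₀]; linarith)
  have hδ0 : 0 < δ := Real.sqrt_pos.mpr (by positivity)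
  -- basic facts about p
  have hq : ∀ i, 0 ≤ p i := fun i => (hp ⟨0, hn0⟩ i) ▸ ENNReal.toReal_nonneg
  have hq1 : ∑ i, p i = 1 := by
    have hdisj : Set.PairwiseDisjoint (↑(Finset.univ : Finset (Fin m)))
        (fun i => U ⟨0, hn0⟩ ⁻¹' {i}) := by
      intro i _ j _ hij
      apply Set.disjoint_left.mpr
      intro ω hωi hωj
      exact hij (by rw [← hωi, ← hωj])
    have hcover : (⋃ i ∈ (Finset.univ : Finset (Fin m)), U ⟨0, hn0⟩ ⁻¹' {i}) = Set.univ := by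
      ext ω; simp
    have hmeas' : ∀ i ∈ (Finset.univ : Finset (Fin m)), MeasurableSet (U ⟨0, hn0⟩ ⁻¹' {i}) :=
      fun i _ => hmeas _ (measurableSet_singleton i)
    have key : ∑ i, μ (U ⟨0, hn0⟩ ⁻¹' {i}) = 1 := by
      rw [← measure_biUnion_finset hdisj hmeas', hcover, measure_univ]
    have : ∑ i, (μ (U ⟨0, hn0⟩ ⁻¹' {i})).toReal = 1 := by
      rw [← ENNReal.toReal_sum (fun i _ => measure_ne_top μ _), key, ENNReal.toReal_one]
    calc ∑ i, p i = ∑ i, (μ {ω | U ⟨0, hn0⟩ ω = i}).toReal := by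
          apply Finset.sum_congr rfl; intro i _; rw [hp]
      _ = 1 := this
  -- the map to the finite configuration space
  set V : Ω → (Fin n → Fin m) := fun ω k => U k ω with hV
  have hVmeas : Measurable V := measurable_pi_lambda _ hmeas
  set ν : Measure (Fin n → Fin m) := μ.map V with hν
  have hνprob : IsProbabilityMeasure ν := Measure.isProbabilityMeasure_map hVmeas.aemeasurable
  have hsingle : ∀ x : Fin n → Fin m, ν {x} = ENNReal.ofReal (W p n x) := by
    intro x
    rw [hν, Measure.map_apply hVmeas (measurableSet_singleton x)]
    have hpre : V ⁻¹' {x} = ⋂ k, U k ⁻¹' {x k} := by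
      ext ω
      simp [hV, funext_iff]
    rw [hpre]
    have := hindep.meas_iInter (s := fun k => U k ⁻¹' {x k})
      (fun k => ⟨{x k}, measurableSet_singleton _, rfl⟩)
    rw [this]
    rw [show W p n x = ∏ k, p (x k) from rfl, ENNReal.ofReal_prod_of_nonneg (fun k _ => hq _)]
    apply Finset.prod_congr rfl
    intro k _
    have h1 : (μ (U k ⁻¹' {x k})).toReal = p (x k) := hp k (x k)
    rw [← h1, ENNReal.ofReal_toReal (measure_ne_top μ _)]
  have hsingle' : ∀ x : Fin n → Fin m, (ν {x}).toReal = W p n x := by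
    intro x
    rw [hsingle x, ENNReal.toReal_ofReal (W_nonneg p hq n x)]
  -- the entropy function on configurations
  set F : (Fin n → Fin m) → ℝ := fun x =>
    -∑ i : Fin m, ((univ.filter fun k => x k = i).card : ℝ)/n
        * Real.logb 2 (((univ.filter fun k => x k = i).card : ℝ)/n) with hF
  have hHF : ∀ ω, Hmle ω = F (V ω) := by
    intro ω
    rw [hHmle, hF]
    simp only [hV]
    congr 1
    apply Finset.sum_congr rfl
    intro i _
    rw [hphat]
  -- integrals
  have hInt : ∫ ω', Hmle ω' ∂μ = ∑ x, W p n x * F x := by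
    have h1 : ∫ ω', Hmle ω' ∂μ = ∫ ω', F (V ω') ∂μ := by
      apply integral_congr_ae
      filter_upwards with ω using hHF ω
    have h2 : ∫ x, F x ∂ν = ∑ x, W p n x * F x := by
      rw [integral_fintype (Integrable.of_finite)]
      apply Finset.sum_congr rfl
      intro x _
      rw [smul_eq_mul, measureReal_def, hsingle' x]
    rw [h1, ← h2, hν]
    exact (integral_map hVmeas.aemeasurable (measurable_of_countable F).aestronglyMeasurable).symm
  -- event rewriting
  set EF := ∑ x, W p n x * F x with hEF
  have hevent : {ω | δ ≤ |Hmle ω - ∫ ω', Hmle ω' ∂μ|} = V ⁻¹' {x | δ ≤ |F x - EF|} := by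
    ext ω
    simp only [Set.mem_setOf_eq, Set.mem_preimage, hHF ω, hInt, hEF]
  have hmeasbad : MeasurableSet {x : Fin n → Fin m | δ ≤ |F x - EF|} :=
    Set.Countable.measurableSet (Set.to_countable _)
  have hνbad : μ {ω | δ ≤ |Hmle ω - ∫ ω', Hmle ω' ∂μ|} = ν {x | δ ≤ |F x - EF|} := by
    rw [hevent, hν, Measure.map_apply hVmeas hmeasbad]
  -- measure of bad set as a sum
  have hsetsum : ν {x | δ ≤ |F x - EF|}
      = ENNReal.ofReal (∑ x ∈ Finset.univ.filter (fun x => δ ≤ |F x - EF|), W p n x) := by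
    have hcoe : {x : Fin n → Fin m | δ ≤ |F x - EF|}
        = ⋃ x ∈ Finset.univ.filter (fun x => δ ≤ |F x - EF|), ({x} : Set (Fin n → Fin m)) := by
      ext x
      simp
    rw [hcoe, measure_biUnion_finset]
    · rw [ENNReal.ofReal_sum_of_nonneg (fun x _ => W_nonneg p hq n x)]
      apply Finset.sum_congr rfl
      intro x _
      exact hsingle x
    · intro x _ y _ hxy
      simp [Set.disjoint_left, hxy]
    · intro x _
      exact measurableSet_singleton x
  -- apply McDiarmid
  set c := 2 * L / n with hc
  have hc0 : 0 < c := by positivity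
  have hBD : BD n F c := by
    rw [hF, hc, hL]
    exact ent_BD n m hn
  have hmcd := mcdiarmid_fin p hq hq1 n hn0 F c hc0 hBD δ hδ0
  -- final arithmetic
  have harith : 2 * Real.exp (-2 * δ ^ 2 / (n * c ^ 2)) = ε := by
    have hδsq : δ ^ 2 = 2 * L ^ 2 * Real.log (2 / ε) / n := by
      rw [hδ, Real.sq_sqrt (by positivity)]
    have hexp : -2 * δ ^ 2 / (n * c ^ 2) = -Real.log (2 / ε) := by
      rw [hδsq, hc]
      field_simp
    rw [hexp, Real.exp_neg, Real.exp_log (by positivity)]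
    field_simp
  rw [hνbad, hsetsum]
  apply ENNReal.ofReal_le_ofReal
  calc ∑ x ∈ Finset.univ.filter (fun x => δ ≤ |F x - EF|), W p n x
      ≤ 2 * Real.exp (-2 * δ ^ 2 / (n * c ^ 2)) := by
        rw [hEF] at *
        exact hmcd
    _ = ε := harith
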